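/- The shift homomorphism T : B_∞ → B_∞ is injective. -/

import Mathlib

/-!
Generators are 0-indexed: the generator of index `i` represents `σ_{i+1}`
of the braid group presentation.
-/

/-- Relators of the infinite braid group `B_∞`: generator `i : ℕ` represents `σ_{i+1}`. -/
def braidRelsInf : Set (FreeGroup ℕ) :=
  {r | (∃ i j : ℕ, i + 2 ≤ j ∧
          r = FreeGroup.of i * FreeGroup.of j * (FreeGroup.of i)⁻¹ * (FreeGroup.of j)⁻¹) ∨
       (∃ i : ℕ,
          r = FreeGroup.of i * FreeGroup.of (i + 1) * FreeGroup.of i *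
              (FreeGroup.of (i + 1))⁻¹ * (FreeGroup.of i)⁻¹ * (FreeGroup.of (i + 1))⁻¹)}

/-- The infinite braid group `B_∞`. -/
def BInf : Type := PresentedGroup braidRelsInf

instance : Group BInf := by unfold BInf; infer_instance

/-- `iσ i` is the generator `σ_{i+1}` of `B_∞` (0-indexed, so `iσ 0 = σ_1`). -/
def iσ (i : ℕ) : BInf := PresentedGroup.of i

lemma braid_rel_one {r : FreeGroup ℕ} (hr : r ∈ braidRelsInf) :
    (QuotientGroup.mk r : BInf) = 1 :=
  (QuotientGroup.eq_one_iff _).mpr (Subgroup.subset_normalClosure hr)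

lemma iσ_comm {i j : ℕ} (h : i + 2 ≤ j) : iσ i * iσ j = iσ j * iσ i := by
  have h1 := braid_rel_one (Or.inl ⟨i, j, h, rfl⟩)
  have h2 : iσ i * iσ j * (iσ i)⁻¹ * (iσ j)⁻¹ = 1 := by
    simp only [iσ, PresentedGroup.of, ← map_inv, ← map_mul]
    exact h1
  rw [mul_inv_eq_one, mul_inv_eq_iff_eq_mul] at h2
  exact h2

lemma iσ_braid (i : ℕ) :
    iσ i * iσ (i + 1) * iσ i = iσ (i + 1) * iσ i * iσ (i + 1) := by
  have h1 := braid_rel_one (Or.inr ⟨i, rfl⟩)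
  have h2 : iσ i * iσ (i + 1) * iσ i * (iσ (i + 1))⁻¹ * (iσ i)⁻¹ * (iσ (i + 1))⁻¹ = 1 := by
    simp only [iσ, PresentedGroup.of, ← map_inv, ← map_mul]
    exact h1
  rw [mul_inv_eq_one, mul_inv_eq_iff_eq_mul, mul_inv_eq_iff_eq_mul] at h2
  exact h2

/-- The "half twist" prefix `σ_0 σ_1 ⋯ σ_{n-1}`. -/
def dd (n : ℕ) : BInf := ((List.range n).map iσ).prod

lemma dd_succ (n : ℕ) : dd (n + 1) = dd n * iσ n := by
  simp [dd, List.range_succ]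

lemma iσ_comm_dd {j k : ℕ} (h : k + 1 ≤ j) : iσ j * dd k = dd k * iσ j := by
  induction k with
  | zero => simp [dd]
  | succ k ih =>
    rw [dd_succ, ← mul_assoc, ih (by omega), mul_assoc,
      ← iσ_comm (show k + 2 ≤ j by omega), ← mul_assoc]

lemma dd_conj {i m : ℕ} (h : i + 2 ≤ m) : dd m * iσ i = iσ (i + 1) * dd m := by
  induction m with
  | zero => omega
  | succ m ih =>
    rcases Nat.lt_or_ge (i + 2) (m + 1) with hm | hm
    · rw [dd_succ, mul_assoc, ← iσ_comm (show i + 2 ≤ m by omega), ← mul_assoc,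
        ih (by omega), mul_assoc, ← dd_succ]
    · -- base case: m + 1 = i + 2
      have hmi : m = i + 1 := by omega
      subst hmi
      rw [dd_succ, dd_succ, mul_assoc, mul_assoc, ← mul_assoc (iσ i), iσ_braid i,
        ← mul_assoc, ← mul_assoc, ← iσ_comm_dd (show i + 1 ≤ i + 1 from le_rfl),
        mul_assoc, mul_assoc, mul_assoc]

lemma T_eq_conj (T : BInf →* BInf) (hT : ∀ i : ℕ, T (iσ i) = iσ (i + 1)) (g : BInf) :
    ∃ n, ∀ m, n ≤ m → T g = dd m * g * (dd m)⁻¹ := by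
  have hg : g ∈ Subgroup.closure (Set.range iσ) := by
    have : Subgroup.closure (Set.range iσ) = ⊤ :=
      PresentedGroup.closure_range_of braidRelsInf
    rw [this]; trivial
  induction hg using Subgroup.closure_induction with
  | mem x hx =>
    obtain ⟨i, rfl⟩ := hx
    exact ⟨i + 2, fun m hm => by
      rw [hT, eq_mul_inv_iff_mul_eq, ← dd_conj hm]⟩
  | one => exact ⟨0, fun m _ => by simp⟩
  | mul x y _ _ hx hy =>
    obtain ⟨n₁, h₁⟩ := hx
    obtain ⟨n₂, h₂⟩ := hy
    exact ⟨max n₁ n₂, fun m hm => by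
      rw [map_mul, h₁ m (le_trans (le_max_left _ _) hm),
        h₂ m (le_trans (le_max_right _ _) hm)]
      group⟩
  | inv x _ hx =>
    obtain ⟨n, h⟩ := hx
    exact ⟨n, fun m hm => by rw [map_inv, h m hm]; group⟩

/-- The shift homomorphism `T : B_∞ → B_∞`, determined by `T (σ_i) = σ_{i+1}`
for all `i ≥ 1`, is injective. -/
theorem shift_injective (T : BInf →* BInf) (hT : ∀ i : ℕ, T (iσ i) = iσ (i + 1)) :
    Function.Injective T := by
  rw [injective_iff_map_eq_one]
  intro g hg
  obtain ⟨n, h⟩ := T_eq_conj T hT g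
  have h2 : dd n * g * (dd n)⁻¹ = 1 := by rw [← h n le_rfl, hg]
  calc g = (dd n)⁻¹ * (dd n * g * (dd n)⁻¹) * dd n := by group
  _ = 1 := by rw [h2]; group
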